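/- Let ŝ : Δ_n × {1,…,n} → ℝ be a permutation-invariant classical scoring rule and let S[ŝ] be the corresponding spectral score on Dens(n). Then S[ŝ] is truthful if and only if ŝ is proper, and S[ŝ] is strictly truthful if and only if ŝ is strictly proper. -/

import Mathlib

open Matrix BigOperators ComplexOrder

noncomputable section

/-- The space of `n × n` complex matrices. -/
abbrev Mat (n : ℕ) := Matrix (Fin n) (Fin n) ℂ

/-- The set of density matrices on ℂⁿ: positive semidefinite with trace 1. -/
def Dens (n : ℕ) : Set (Mat n) := {ρ | ρ.PosSemidef ∧ ρ.trace = 1}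

/-- Real inner product on (Hermitian) matrices: ⟨A,B⟩ = Tr(AB) (real part). -/
def hip {n : ℕ} (A B : Mat n) : ℝ := ((A * B).trace).re

/-- A POVM with finite outcome set `Y`. -/
def IsPOVM {n : ℕ} {Y : Type*} [Fintype Y] (μ : Y → Mat n) : Prop :=
  (∀ y, (μ y).PosSemidef) ∧ ∑ y, μ y = 1

/-- A projection-valued measurement. -/
def IsPVM {n : ℕ} {Y : Type*} [Fintype Y] (μ : Y → Mat n) : Prop :=
  IsPOVM μ ∧ (∀ y, (μ y).IsHermitian ∧ μ y * μ y = μ y) ∧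
    ∀ y y', y ≠ y' → μ y * μ y' = 0

/-- Expected score of a quantum score with report type `R`. -/
def expScoreR {n : ℕ} {R : Type*} {Y : Type*} [Fintype Y]
    (s : R → Y → ℝ) (μ : R → Y → Mat n) (r : R) (ρ : Mat n) : ℝ :=
  ∑ y, hip (μ r y) ρ * s r y

/-- Truthfulness of a quantum score. -/
def Truthful {n : ℕ} {Y : Type*} [Fintype Y]
    (s : Mat n → Y → ℝ) (μ : Mat n → Y → Mat n) : Prop :=
  ∀ ρ ∈ Dens n, ∀ ρ' ∈ Dens n, expScoreR s μ ρ' ρ ≤ expScoreR s μ ρ ρ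

/-- Strict truthfulness of a quantum score. -/
def StrictlyTruthful {n : ℕ} {Y : Type*} [Fintype Y]
    (s : Mat n → Y → ℝ) (μ : Mat n → Y → Mat n) : Prop :=
  Truthful s μ ∧ ∀ ρ ∈ Dens n, ∀ ρ' ∈ Dens n,
    expScoreR s μ ρ' ρ = expScoreR s μ ρ ρ → ρ' = ρ

/-- `d` is a (Hermitian-matrix) subgradient of `F` at `ρ` relative to `Dens n`. -/
def IsQSubgrad {n : ℕ} (F : Mat n → ℝ) (ρ d : Mat n) : Prop :=
  ∀ τ ∈ Dens n, F ρ + hip d (τ - ρ) ≤ F τ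

/-- `d` is a subgradient of `f` at `p` relative to `P ⊆ ℝ^Y`. -/
def IsCSubgrad {Y : Type*} [Fintype Y] (P : Set (Y → ℝ)) (f : (Y → ℝ) → ℝ)
    (p d : Y → ℝ) : Prop :=
  ∀ q ∈ P, f p + ∑ y, d y * (q y - p y) ≤ f q

/-- A POVM is tomographically complete if the real span of its elements is
the set of Hermitian matrices. -/
def TomoComplete {n : ℕ} {Y : Type*} [Fintype Y] (μ : Y → Mat n) : Prop :=
  ∀ X : Mat n, X.IsHermitian ↔ X ∈ Submodule.span ℝ (Set.range μ)

/-- The eigenvalues of a Hermitian matrix, in non-increasing order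
(junk value `0` on non-Hermitian matrices). -/
def eigs {n : ℕ} (ρ : Mat n) : Fin n → ℝ :=
  if h : ρ.IsHermitian then
    fun i => (h.eigenvalues ∘ (Tuple.sort h.eigenvalues)) i.rev
  else 0

/-- The outer product `v v*`. -/
def outer {n : ℕ} (v : Fin n → ℂ) : Mat n := Matrix.vecMulVec v (star v)

/-- A family of orthonormal vectors in ℂⁿ. -/
def ONFam {n k : ℕ} (x : Fin k → Fin n → ℂ) : Prop :=
  ∀ i j, ∑ m, (starRingEnd ℂ) (x i m) * x j m = if i = j then 1 else 0

/-- `x` is a spectral decomposition of `ρ` (with eigenvalues in non-increasing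
order `eigs ρ`). -/
def IsSpecDecomp {n : ℕ} (ρ : Mat n) (x : Fin n → Fin n → ℂ) : Prop :=
  ONFam x ∧ ρ = ∑ y, (eigs ρ y : ℂ) • outer (x y)

/-- Expected classical score `ŝ(q; p)`. -/
def cExp {n : ℕ} (s : (Fin n → ℝ) → Fin n → ℝ) (q p : Fin n → ℝ) : ℝ :=
  ∑ y, p y * s q y

/-- Properness of a classical scoring rule. -/
def Proper {n : ℕ} (s : (Fin n → ℝ) → Fin n → ℝ) : Prop :=
  ∀ p ∈ stdSimplex ℝ (Fin n), ∀ q ∈ stdSimplex ℝ (Fin n), cExp s q p ≤ cExp s p p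

/-- Strict properness of a classical scoring rule. -/
def StrictlyProper {n : ℕ} (s : (Fin n → ℝ) → Fin n → ℝ) : Prop :=
  Proper s ∧ ∀ p ∈ stdSimplex ℝ (Fin n), ∀ q ∈ stdSimplex ℝ (Fin n),
    cExp s q p = cExp s p p → q = p

/-- Permutation invariance of a classical scoring rule: `ŝ(p, y) = ŝ(πp, π y)`
where `(πp)_y = p_{π y}`. -/
def PermInv {n : ℕ} (s : (Fin n → ℝ) → Fin n → ℝ) : Prop :=
  ∀ (π : Equiv.Perm (Fin n)) (p : Fin n → ℝ) (y : Fin n), s p y = s (p ∘ π) (π y)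

/-- Expected spectral score `S[ŝ](ρ'; ρ)` computed using the spectral
decomposition `x` of the report `ρ'`. -/
def specExp {n : ℕ} (s : (Fin n → ℝ) → Fin n → ℝ) (x : Fin n → Fin n → ℂ)
    (ρ' ρ : Mat n) : ℝ :=
  ∑ y, hip (outer (x y)) ρ * s (eigs ρ') y

/-- Truthfulness of the spectral score `S[ŝ]`. -/
def SpecTruthful {n : ℕ} (s : (Fin n → ℝ) → Fin n → ℝ) : Prop :=
  ∀ ρ ∈ Dens n, ∀ ρ' ∈ Dens n, ∀ x z, IsSpecDecomp ρ' x → IsSpecDecomp ρ z →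
    specExp s x ρ' ρ ≤ specExp s z ρ ρ

/-- Strict truthfulness of the spectral score `S[ŝ]`. -/
def SpecStrictlyTruthful {n : ℕ} (s : (Fin n → ℝ) → Fin n → ℝ) : Prop :=
  SpecTruthful s ∧ ∀ ρ ∈ Dens n, ∀ ρ' ∈ Dens n, ∀ x z,
    IsSpecDecomp ρ' x → IsSpecDecomp ρ z →
    specExp s x ρ' ρ = specExp s z ρ ρ → ρ' = ρ

/-- Elicitability of a property of density matrices by a quantum score. -/
def ElicitableProp {n : ℕ} {R : Type*} (Γ : Mat n → R) : Prop :=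
  ∃ (m : ℕ) (s : R → Fin m → ℝ) (μ : R → Fin m → Mat n),
    (∀ r, IsPOVM (μ r)) ∧
    ∀ ρ ∈ Dens n, ∀ r, (∀ r', expScoreR s μ r' ρ ≤ expScoreR s μ r ρ) ↔ r = Γ ρ

/-- Identifiability of an ℝᵏ-valued property of density matrices. -/
def IdentifiableProp {n k : ℕ} (Γ : Mat n → (Fin k → ℝ)) : Prop :=
  ∃ V : (Fin k → ℝ) → Fin k → Mat n,
    ∀ r ∈ Γ '' (Dens n), (∀ i, (V r i).IsHermitian) ∧
      ∀ ρ ∈ Dens n, (Γ ρ = r ↔ ∀ i, hip (V r i) ρ = 0)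

/-- `Γ` is `k`-elicitable. -/
def KElicitable {n : ℕ} {R : Type*} (k : ℕ) (Γ : Mat n → R) : Prop :=
  ∃ (Γh : Mat n → (Fin k → ℝ)) (ψ : (Fin k → ℝ) → R),
    ElicitableProp Γh ∧ IdentifiableProp Γh ∧ ∀ ρ ∈ Dens n, Γ ρ = ψ (Γh ρ)

end

/-! ### Auxiliary lemmas -/

section Aux

open Finset Polynomial

variable {n : ℕ}

/-- The multiset of values of a tuple is invariant under permutation. -/
lemma multiset_comp_perm (f : Fin n → ℝ) (σ : Equiv.Perm (Fin n)) :
    Finset.univ.val.map (f ∘ σ) = Finset.univ.val.map f := by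
  rw [Fin.univ_val_map, Fin.univ_val_map]
  exact Multiset.coe_eq_coe.2 (Equiv.Perm.ofFn_comp_perm σ f)

/-- Two antitone tuples with the same multiset of values are equal. -/
lemma antitone_unique {f g : Fin n → ℝ} (hf : Antitone f) (hg : Antitone g)
    (h : Finset.univ.val.map f = Finset.univ.val.map g) : f = g := by
  rw [Fin.univ_val_map, Fin.univ_val_map, Multiset.coe_eq_coe] at h
  have hs : ∀ {u : Fin n → ℝ}, Antitone u → (List.ofFn u).SortedGE := by
    intro u hu
    rw [List.sortedGE_ofFn_iff]
    exact hu
  exact List.ofFn_injective (List.Perm.eq_of_sortedGE (hs hf) (hs hg) h)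

/-- Permutation invariance, untwisted form. -/
lemma untwist {s : (Fin n → ℝ) → Fin n → ℝ} (hperm : PermInv s)
    (π : Equiv.Perm (Fin n)) (p : Fin n → ℝ) (y : Fin n) :
    s (p ∘ π) y = s p (π y) := by
  obtain ⟨c, hc⟩ := isConj_iff.1
    (Equiv.Perm.isConj_iff_cycleType_eq.2 (Equiv.Perm.cycleType_inv π).symm)
  have h1 : s (p ∘ ⇑π) y = s ((p ∘ ⇑π) ∘ ⇑c) (c y) := hperm c (p ∘ ⇑π) y
  have h2 : s ((p ∘ ⇑π) ∘ ⇑c) (c y)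
      = s (((p ∘ ⇑π) ∘ ⇑c) ∘ ⇑(π * c⁻¹)) ((π * c⁻¹) (c y)) := hperm (π * c⁻¹) _ _
  have h3 : ((p ∘ ⇑π) ∘ ⇑c) ∘ ⇑(π * c⁻¹) = p := by
    funext i
    have hci : (c * π * c⁻¹) i = π⁻¹ i := by rw [hc]
    simp only [Equiv.Perm.mul_apply] at hci
    simp only [Function.comp_apply, Equiv.Perm.mul_apply, hci]
    simp
  have h4 : (π * c⁻¹) (c y) = π y := by simp [Equiv.Perm.mul_apply]
  rw [h1, h2, h3, h4]

lemma cExp_comp_self {s : (Fin n → ℝ) → Fin n → ℝ} (hperm : PermInv s)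
    (p : Fin n → ℝ) (σ : Equiv.Perm (Fin n)) :
    cExp s (p ∘ σ) (p ∘ σ) = cExp s p p := by
  unfold cExp
  calc ∑ y, (p ∘ σ) y * s (p ∘ σ) y = ∑ y, p (σ y) * s p (σ y) := by
        refine Finset.sum_congr rfl fun y _ => ?_
        rw [Function.comp_apply, untwist hperm]
    _ = ∑ y, p y * s p y := Equiv.sum_comp σ fun w => p w * s p w

lemma comp_mem_simplex {p : Fin n → ℝ} (hp : p ∈ stdSimplex ℝ (Fin n))
    (σ : Equiv.Perm (Fin n)) : p ∘ σ ∈ stdSimplex ℝ (Fin n) := by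
  refine ⟨fun i => hp.1 _, ?_⟩
  simpa using Equiv.sum_comp σ p ▸ hp.2

end Aux

section Aux2

open Finset

variable {n : ℕ}

lemma outer_apply (v : Fin n → ℂ) (i j : Fin n) :
    outer v i j = v i * (starRingEnd ℂ) (v j) := by
  simp [outer, Matrix.vecMulVec_apply, Complex.star_def]

lemma outer_isHermitian (v : Fin n → ℂ) : (outer v).IsHermitian := by
  ext i j
  simp [Matrix.conjTranspose_apply, outer_apply, mul_comm]

lemma hip_eq (A B : Mat n) : hip A B = (∑ i, ∑ j, A i j * B j i).re := by
  simp [hip, Matrix.trace, Matrix.diag, Matrix.mul_apply]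

lemma hip_comm (A B : Mat n) : hip A B = hip B A := by
  rw [hip, hip, Matrix.trace_mul_comm]

lemma hip_sum_right {ι : Type*} (A : Mat n) (t : Finset ι) (f : ι → Mat n) :
    hip A (∑ k ∈ t, f k) = ∑ k ∈ t, hip A (f k) := by
  rw [hip, Matrix.mul_sum, Matrix.trace_sum, Complex.re_sum]
  rfl

lemma hip_smul_right (A B : Mat n) (t : ℝ) : hip A ((t : ℂ) • B) = t * hip A B := by
  rw [hip, hip, Matrix.mul_smul, Matrix.trace_smul, smul_eq_mul, Complex.mul_re]
  simp

lemma hip_sub_right (A B C : Mat n) : hip A (B - C) = hip A B - hip A C := by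
  rw [hip, hip, hip, Matrix.mul_sub, Matrix.trace_sub, Complex.sub_re]

lemma hip_sub_left (A B C : Mat n) : hip (A - B) C = hip A C - hip B C := by
  rw [hip_comm, hip_sub_right, hip_comm A C, hip_comm B C]

lemma hip_one (A : Mat n) : hip A 1 = A.trace.re := by simp [hip]

lemma hip_outer_outer_of_ONFam {x : Fin n → Fin n → ℂ} (hx : ONFam x) (y k : Fin n) :
    hip (outer (x y)) (outer (x k)) = if y = k then 1 else 0 := by
  rw [hip_eq]
  have h1 : ∑ i, ∑ j, outer (x y) i j * outer (x k) j i
      = (∑ i, x y i * (starRingEnd ℂ) (x k i)) * ∑ j, (starRingEnd ℂ) (x y j) * x k j := by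
    rw [Finset.sum_mul_sum]
    refine Finset.sum_congr rfl fun i _ => Finset.sum_congr rfl fun j _ => ?_
    rw [outer_apply, outer_apply]
    ring
  have h2 : (∑ i, x y i * (starRingEnd ℂ) (x k i))
      = (starRingEnd ℂ) (∑ j, (starRingEnd ℂ) (x y j) * x k j) := by
    rw [map_sum]
    refine Finset.sum_congr rfl fun j _ => ?_
    rw [RingHom.map_mul, RingHomCompTriple.comp_apply]
    simp [mul_comm]
  rw [h1, h2, hx y k]
  by_cases h : y = k <;> simp [h]

lemma sum_outer_of_ONFam {x : Fin n → Fin n → ℂ} (hx : ONFam x) :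
    ∑ y, outer (x y) = (1 : Mat n) := by
  let A : Mat n := Matrix.of fun i m => (starRingEnd ℂ) (x i m)
  have hAA : A * Aᴴ = 1 := by
    ext i j
    simp only [Matrix.mul_apply, Matrix.conjTranspose_apply, Matrix.of_apply, A,
      RingHomCompTriple.comp_apply]
    simpa [Matrix.one_apply] using hx i j
  have h2 : Aᴴ * A = 1 := mul_eq_one_comm.mp hAA
  calc ∑ y, outer (x y) = Aᴴ * A := by
        ext m m'
        simp only [Matrix.sum_apply, Matrix.mul_apply, Matrix.conjTranspose_apply,
          Matrix.of_apply, A, outer_apply, RingHomCompTriple.comp_apply]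
        simp
    _ = 1 := h2

lemma hip_outer_nonneg {ρ : Mat n} (hρ : ρ.PosSemidef) (v : Fin n → ℂ) :
    0 ≤ hip (outer v) ρ := by
  have h := hρ.dotProduct_mulVec_nonneg v
  have heq : hip (outer v) ρ = (dotProduct (star v) (ρ.mulVec v)).re := by
    rw [hip_eq, dotProduct]
    congr 1
    rw [Finset.sum_comm]
    refine Finset.sum_congr rfl fun j _ => ?_
    rw [Matrix.mulVec, dotProduct, Finset.mul_sum]
    refine Finset.sum_congr rfl fun i _ => ?_
    simp only [outer_apply, Pi.star_apply, Complex.star_def]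
    ring
  rw [heq]
  exact (Complex.le_def.1 h).1

end Aux2

section Aux3

open Finset Polynomial

variable {n : ℕ}

lemma eigs_of_isHermitian {ρ : Mat n} (hρ : ρ.IsHermitian) :
    eigs ρ = fun i => hρ.eigenvalues (Tuple.sort hρ.eigenvalues i.rev) := by
  funext i
  rw [eigs, dif_pos hρ]
  rfl

lemma eigs_antitone {ρ : Mat n} (hρ : ρ.IsHermitian) : Antitone (eigs ρ) := by
  rw [eigs_of_isHermitian hρ]
  intro i j hij
  exact Tuple.monotone_sort hρ.eigenvalues (Fin.rev_le_rev.2 hij)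

lemma eigs_multiset {ρ : Mat n} (hρ : ρ.IsHermitian) :
    Finset.univ.val.map (eigs ρ) = Finset.univ.val.map hρ.eigenvalues := by
  rw [eigs_of_isHermitian hρ]
  have h : (fun i : Fin n => hρ.eigenvalues (Tuple.sort hρ.eigenvalues i.rev))
      = hρ.eigenvalues ∘ ⇑(Fin.revPerm.trans (Tuple.sort hρ.eigenvalues)) := rfl
  rw [h]
  exact multiset_comp_perm _ _

lemma charpoly_unitary_conj {V M : Mat n} (hV : star V * V = 1) :
    (V * M * star V).charpoly = M.charpoly := by
  have hV2 : V * star V = 1 := mul_eq_one_comm.mp hV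
  have hu1 : (V.map C) * ((star V).map C) = (1 : Matrix (Fin n) (Fin n) ℂ[X]) := by
    rw [← Matrix.map_mul, hV2]
    simp
  have hsc : ∀ W : Matrix (Fin n) (Fin n) ℂ[X],
      W * Matrix.scalar (Fin n) (X : ℂ[X]) = Matrix.scalar (Fin n) (X : ℂ[X]) * W :=
    fun W => (Matrix.scalar_commute (X : ℂ[X]) (fun r' => Commute.all _ r') W).symm
  have hch : charmatrix (V * M * star V) = (V.map C) * charmatrix M * ((star V).map C) := by
    unfold charmatrix
    simp only [RingHom.mapMatrix_apply]
    rw [Matrix.mul_sub, Matrix.sub_mul]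
    congr 1
    · rw [hsc (V.map C), mul_assoc, hu1, mul_one]
    · rw [Matrix.map_mul, Matrix.map_mul]
  rw [Matrix.charpoly, Matrix.charpoly, hch, Matrix.det_mul, Matrix.det_mul]
  have hd : (V.map C).det * ((star V).map C).det = 1 := by
    rw [← Matrix.det_mul, hu1, Matrix.det_one]
  rw [mul_comm (V.map C).det _, mul_assoc, hd, mul_one]

lemma eigenvalues_multiset {x : Fin n → Fin n → ℂ} (hx : ONFam x) (d : Fin n → ℝ)
    {ρ : Mat n} (hform : ρ = ∑ y, (d y : ℂ) • outer (x y)) (hρ : ρ.IsHermitian) :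
    Finset.univ.val.map hρ.eigenvalues = Finset.univ.val.map d := by
  classical
  set V : Mat n := Matrix.of (fun m y => x y m) with hVdef
  have hVu : star V * V = 1 := by
    ext i j
    simp only [Matrix.mul_apply, Matrix.conjTranspose_apply, Matrix.of_apply,
      Complex.star_def, V]
    simpa [Matrix.one_apply] using hx i j
  have hρV : ρ = V * Matrix.diagonal (fun i => (d i : ℂ)) * star V := by
    rw [hform]
    ext m m'
    rw [Matrix.mul_apply]
    simp only [Matrix.sum_apply, Matrix.mul_diagonal, Matrix.conjTranspose_apply,
      Matrix.of_apply, Matrix.smul_apply, outer_apply, Complex.star_def, V, smul_eq_mul,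
      Matrix.star_apply]
    refine Finset.sum_congr rfl fun y _ => ?_
    ring
  have h1 : ρ.charpoly = ∏ i, (X - C ((d i : ℂ))) := by
    rw [hρV, charpoly_unitary_conj hVu,
      Matrix.charpoly_of_upperTriangular _ (Matrix.blockTriangular_diagonal _)]
    simp
  have h2 : ρ.charpoly = ∏ i, (X - C ((hρ.eigenvalues i : ℂ))) := by
    conv_lhs => rw [hρ.spectral_theorem]
    rw [Unitary.conjStarAlgAut_apply, charpoly_unitary_conj (Matrix.UnitaryGroup.star_mul_self _),
      Matrix.charpoly_of_upperTriangular _ (Matrix.blockTriangular_diagonal _)]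
    simp
  have h3 : Multiset.map (fun i => ((d i : ℂ))) Finset.univ.val
      = Multiset.map (fun i => ((hρ.eigenvalues i : ℂ))) Finset.univ.val := by
    have he := h1.symm.trans h2
    rw [Finset.prod_eq_multiset_prod, Finset.prod_eq_multiset_prod] at he
    have h4 : (Multiset.map (fun i : Fin n => X - C ((d i : ℂ))) Finset.univ.val)
        = Multiset.map (fun a : ℂ => X - C a) (Multiset.map (fun i => ((d i : ℂ))) Finset.univ.val) := by
      rw [Multiset.map_map]
      rfl
    have h5 : (Multiset.map (fun i : Fin n => X - C ((hρ.eigenvalues i : ℂ))) Finset.univ.val)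
        = Multiset.map (fun a : ℂ => X - C a)
          (Multiset.map (fun i => ((hρ.eigenvalues i : ℂ))) Finset.univ.val) := by
      rw [Multiset.map_map]
      rfl
    rw [h4, h5] at he
    have := congrArg Polynomial.roots he
    rwa [Polynomial.roots_multiset_prod_X_sub_C, Polynomial.roots_multiset_prod_X_sub_C] at this
  have h6 : Multiset.map (fun r : ℝ => (r : ℂ)) (Finset.univ.val.map hρ.eigenvalues)
      = Multiset.map (fun r : ℝ => (r : ℂ)) (Finset.univ.val.map d) := by
    rw [Multiset.map_map, Multiset.map_map]
    exact h3.symm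
  exact Multiset.map_injective Complex.ofReal_injective h6

lemma eigs_eq_of_antitone {x : Fin n → Fin n → ℂ} (hx : ONFam x) {d : Fin n → ℝ}
    (hd : Antitone d) {ρ : Mat n} (hform : ρ = ∑ y, (d y : ℂ) • outer (x y)) :
    eigs ρ = d := by
  have hρ : ρ.IsHermitian := by
    rw [hform]
    unfold Matrix.IsHermitian
    rw [Matrix.conjTranspose_sum]
    refine Finset.sum_congr rfl fun y _ => ?_
    rw [Matrix.conjTranspose_smul, Complex.star_def, Complex.conj_ofReal,
      outer_isHermitian (x y)]
  apply antitone_unique (eigs_antitone hρ) hd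
  rw [eigs_multiset hρ]
  exact eigenvalues_multiset hx d hform hρ

end Aux3

section Aux4

open Finset

variable {n : ℕ}

lemma hip_outer_outer (v w : Fin n → ℂ) :
    hip (outer v) (outer w) = Complex.normSq (∑ m, (starRingEnd ℂ) (v m) * w m) := by
  rw [hip_eq]
  have h1 : ∑ i, ∑ j, outer v i j * outer w j i
      = (∑ i, v i * (starRingEnd ℂ) (w i)) * ∑ j, (starRingEnd ℂ) (v j) * w j := by
    rw [Finset.sum_mul_sum]
    refine Finset.sum_congr rfl fun i _ => Finset.sum_congr rfl fun j _ => ?_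
    rw [outer_apply, outer_apply]
    ring
  have h2 : (∑ i, v i * (starRingEnd ℂ) (w i))
      = (starRingEnd ℂ) (∑ j, (starRingEnd ℂ) (v j) * w j) := by
    rw [map_sum]
    refine Finset.sum_congr rfl fun j _ => ?_
    rw [RingHom.map_mul, RingHomCompTriple.comp_apply]
    simp [mul_comm]
  rw [h1, h2, ← Complex.normSq_eq_conj_mul_self]
  simp

lemma hip_outer_outer_nonneg (v w : Fin n → ℂ) : 0 ≤ hip (outer v) (outer w) := by
  rw [hip_outer_outer]
  exact Complex.normSq_nonneg _

lemma hip_outer_one {x : Fin n → Fin n → ℂ} (hx : ONFam x) (y : Fin n) :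
    hip (outer (x y)) 1 = 1 := by
  rw [hip_one]
  have ht : (outer (x y)).trace = 1 := by
    rw [Matrix.trace]
    have : ∀ m, (outer (x y)).diag m = (starRingEnd ℂ) (x y m) * x y m := fun m => by
      rw [Matrix.diag_apply, outer_apply, mul_comm]
    rw [Finset.sum_congr rfl fun m _ => this m]
    simpa using hx y y
  rw [ht]
  simp

lemma hip_outer_spec {ρ : Mat n} {z : Fin n → Fin n → ℂ} (hz : IsSpecDecomp ρ z)
    (v : Fin n → ℂ) : hip (outer v) ρ = ∑ k, eigs ρ k * hip (outer v) (outer (z k)) := by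
  conv_lhs => rw [hz.2]
  rw [hip_sum_right]
  exact Finset.sum_congr rfl fun k _ => hip_smul_right _ _ _

lemma hip_outer_self_spec {ρ : Mat n} {z : Fin n → Fin n → ℂ} (hz : IsSpecDecomp ρ z)
    (y : Fin n) : hip (outer (z y)) ρ = eigs ρ y := by
  rw [hip_outer_spec hz]
  have h : ∀ k, eigs ρ k * hip (outer (z y)) (outer (z k))
      = if k = y then eigs ρ k else 0 := by
    intro k
    rw [hip_outer_outer_of_ONFam hz.1]
    by_cases h : y = k
    · subst h; simp
    · simp [h, Ne.symm h]
  rw [Finset.sum_congr rfl fun k _ => h k, Finset.sum_ite_eq' Finset.univ y (eigs ρ)]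
  simp

lemma specExp_self (s : (Fin n → ℝ) → Fin n → ℝ) {ρ : Mat n} {z : Fin n → Fin n → ℂ}
    (hz : IsSpecDecomp ρ z) : specExp s z ρ ρ = cExp s (eigs ρ) (eigs ρ) := by
  unfold specExp cExp
  exact Finset.sum_congr rfl fun y _ => by rw [hip_outer_self_spec hz]

lemma sum_hip_outer {ρ : Mat n} (hρ : ρ ∈ Dens n) {x : Fin n → Fin n → ℂ} (hx : ONFam x) :
    ∑ y, hip (outer (x y)) ρ = 1 := by
  calc ∑ y, hip (outer (x y)) ρ = ∑ y, hip ρ (outer (x y)) :=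
        Finset.sum_congr rfl fun y _ => hip_comm _ _
    _ = hip ρ (∑ y, outer (x y)) := (hip_sum_right ρ _ _).symm
    _ = hip ρ 1 := by rw [sum_outer_of_ONFam hx]
    _ = 1 := by rw [hip_one, hρ.2, Complex.one_re]

lemma eigs_mem_simplex {ρ : Mat n} (hρ : ρ ∈ Dens n) {z : Fin n → Fin n → ℂ}
    (hz : IsSpecDecomp ρ z) : eigs ρ ∈ stdSimplex ℝ (Fin n) := by
  constructor
  · intro i
    rw [← hip_outer_self_spec hz i]
    exact hip_outer_nonneg hρ.1 _
  · calc ∑ i, eigs ρ i = ∑ i, hip (outer (z i)) ρ :=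
        Finset.sum_congr rfl fun i _ => (hip_outer_self_spec hz i).symm
      _ = 1 := sum_hip_outer hρ hz.1

lemma exists_weights {ρ : Mat n} (hρ : ρ ∈ Dens n) {z : Fin n → Fin n → ℂ}
    (hz : IsSpecDecomp ρ z) {x : Fin n → Fin n → ℂ} (hx : ONFam x) :
    ∃ c : Equiv.Perm (Fin n) → ℝ, (∀ σ, 0 ≤ c σ) ∧ (∑ σ, c σ) = 1 ∧
      ∀ y, hip (outer (x y)) ρ = ∑ σ, c σ * eigs ρ (σ y) := by
  classical
  set D : Matrix (Fin n) (Fin n) ℝ :=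
    Matrix.of (fun y k => hip (outer (x y)) (outer (z k))) with hD
  have hDmem : D ∈ doublyStochastic ℝ (Fin n) := by
    rw [mem_doublyStochastic_iff_sum]
    refine ⟨fun i j => hip_outer_outer_nonneg _ _, fun i => ?_, fun j => ?_⟩
    · calc ∑ j, hip (outer (x i)) (outer (z j))
          = hip (outer (x i)) (∑ j, outer (z j)) := (hip_sum_right _ _ _).symm
        _ = 1 := by rw [sum_outer_of_ONFam hz.1, hip_outer_one hx]
    · calc ∑ i, hip (outer (x i)) (outer (z j))
          = ∑ i, hip (outer (z j)) (outer (x i)) :=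
            Finset.sum_congr rfl fun i _ => hip_comm _ _
        _ = hip (outer (z j)) (∑ i, outer (x i)) := (hip_sum_right _ _ _).symm
        _ = 1 := by rw [sum_outer_of_ONFam hx, hip_outer_one hz.1]
  obtain ⟨c, hc0, hc1, hcsum⟩ := exists_eq_sum_perm_of_mem_doublyStochastic hDmem
  refine ⟨c, hc0, hc1, fun y => ?_⟩
  have hp : hip (outer (x y)) ρ = ∑ k, eigs ρ k * D y k := hip_outer_spec hz _
  have hD2 : ∀ k, D y k = ∑ σ : Equiv.Perm (Fin n), c σ * (σ.permMatrix ℝ) y k := by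
    intro k
    rw [← hcsum]
    simp [Matrix.sum_apply]
  calc hip (outer (x y)) ρ = ∑ k, eigs ρ k * D y k := hp
    _ = ∑ k, ∑ σ : Equiv.Perm (Fin n), c σ * (eigs ρ k * (σ.permMatrix ℝ) y k) := by
        refine Finset.sum_congr rfl fun k _ => ?_
        rw [hD2 k, Finset.mul_sum]
        exact Finset.sum_congr rfl fun σ _ => by ring
    _ = ∑ σ : Equiv.Perm (Fin n), ∑ k, c σ * (eigs ρ k * (σ.permMatrix ℝ) y k) :=
        Finset.sum_comm
    _ = ∑ σ : Equiv.Perm (Fin n), c σ * eigs ρ (σ y) := by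
        refine Finset.sum_congr rfl fun σ _ => ?_
        rw [← Finset.mul_sum]
        congr 1
        have : ∀ k, eigs ρ k * (σ.permMatrix ℝ) y k = if k = σ y then eigs ρ k else 0 := by
          intro k
          rw [Equiv.Perm.permMatrix, PEquiv.toMatrix_apply, Equiv.toPEquiv_apply]
          by_cases h : σ y = k
          · subst h; simp
          · simp [h, Ne.symm h]
        rw [Finset.sum_congr rfl fun k _ => this k,
          Finset.sum_ite_eq' Finset.univ (σ y) (eigs ρ)]
        simp

end Aux4

section Aux5

open Finset

variable {n : ℕ}

lemma hip_self_eq_zero {A : Mat n} (hA : A.IsHermitian) (h : hip A A = 0) : A = 0 := by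
  have h1 : hip A A = ∑ i, ∑ j, Complex.normSq (A j i) := by
    rw [hip_eq, Complex.re_sum]
    refine Finset.sum_congr rfl fun i _ => ?_
    rw [Complex.re_sum]
    refine Finset.sum_congr rfl fun j _ => ?_
    have hAij : A i j = (starRingEnd ℂ) (A j i) := by
      conv_lhs => rw [← hA]
      rw [Matrix.conjTranspose_apply, Complex.star_def]
    rw [hAij, ← Complex.normSq_eq_conj_mul_self, Complex.ofReal_re]
  rw [h1] at h
  ext i j
  have h2 := (Finset.sum_eq_zero_iff_of_nonneg
    (fun i' _ => Finset.sum_nonneg fun j' _ => Complex.normSq_nonneg (A j' i'))).1 h j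
    (Finset.mem_univ j)
  have h3 := (Finset.sum_eq_zero_iff_of_nonneg
    (fun j' _ => Complex.normSq_nonneg (A j' j))).1 h2 i (Finset.mem_univ i)
  simpa using Complex.normSq_eq_zero.1 h3

lemma specExp_le_main {s : (Fin n → ℝ) → Fin n → ℝ} (hperm : PermInv s) (hp : Proper s)
    {ρ ρ' : Mat n} (hρ : ρ ∈ Dens n) (hρ' : ρ' ∈ Dens n)
    {x z : Fin n → Fin n → ℂ} (hx : IsSpecDecomp ρ' x) (hz : IsSpecDecomp ρ z) :
    specExp s x ρ' ρ ≤ specExp s z ρ ρ ∧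
      (specExp s x ρ' ρ = specExp s z ρ ρ → StrictlyProper s → ρ' = ρ) := by
  classical
  obtain ⟨c, hc0, hc1, hcp⟩ := exists_weights hρ hz hx.1
  set L : Fin n → ℝ := eigs ρ with hLdef
  have hL : L ∈ stdSimplex ℝ (Fin n) := eigs_mem_simplex hρ hz
  have hL' : eigs ρ' ∈ stdSimplex ℝ (Fin n) := eigs_mem_simplex hρ' hx
  have key : specExp s x ρ' ρ = ∑ σ : Equiv.Perm (Fin n), c σ * cExp s (eigs ρ' ∘ ⇑σ⁻¹) L := by
    unfold specExp
    calc ∑ y, hip (outer (x y)) ρ * s (eigs ρ') y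
        = ∑ y, (∑ σ : Equiv.Perm (Fin n), c σ * L (σ y)) * s (eigs ρ') y :=
          Finset.sum_congr rfl fun y _ => by rw [hcp y]
      _ = ∑ y, ∑ σ : Equiv.Perm (Fin n), c σ * (L (σ y) * s (eigs ρ') y) := by
          refine Finset.sum_congr rfl fun y _ => ?_
          rw [Finset.sum_mul]
          exact Finset.sum_congr rfl fun σ _ => by ring
      _ = ∑ σ : Equiv.Perm (Fin n), ∑ y, c σ * (L (σ y) * s (eigs ρ') y) := Finset.sum_comm
      _ = ∑ σ : Equiv.Perm (Fin n), c σ * cExp s (eigs ρ' ∘ ⇑σ⁻¹) L := by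
          refine Finset.sum_congr rfl fun σ _ => ?_
          rw [← Finset.mul_sum]
          congr 1
          have hre : ∑ y, L (σ y) * s (eigs ρ') y
              = ∑ w, L w * s (eigs ρ') (σ⁻¹ w) := by
            have hq := Equiv.sum_comp σ (fun w => L w * s (eigs ρ') (σ⁻¹ w))
            simp only [Equiv.Perm.inv_def, Equiv.symm_apply_apply] at hq
            exact hq
          rw [hre]
          unfold cExp
          exact (Finset.sum_congr rfl fun w _ => by rw [untwist hperm σ⁻¹]).symm
  have hterm : ∀ σ : Equiv.Perm (Fin n), cExp s (eigs ρ' ∘ ⇑σ⁻¹) L ≤ cExp s L L :=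
    fun σ => hp L hL _ (comp_mem_simplex hL' σ⁻¹)
  have hself : specExp s z ρ ρ = cExp s L L := specExp_self s hz
  have hle : specExp s x ρ' ρ ≤ specExp s z ρ ρ := by
    rw [key, hself]
    calc ∑ σ : Equiv.Perm (Fin n), c σ * cExp s (eigs ρ' ∘ ⇑σ⁻¹) L
        ≤ ∑ σ : Equiv.Perm (Fin n), c σ * cExp s L L :=
          Finset.sum_le_sum fun σ _ => mul_le_mul_of_nonneg_left (hterm σ) (hc0 σ)
      _ = cExp s L L := by rw [← Finset.sum_mul, hc1, one_mul]
  refine ⟨hle, fun heq hsp => ?_⟩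
  have hzero : ∑ σ : Equiv.Perm (Fin n), c σ * (cExp s L L - cExp s (eigs ρ' ∘ ⇑σ⁻¹) L) = 0 := by
    have : ∑ σ : Equiv.Perm (Fin n), c σ * (cExp s L L - cExp s (eigs ρ' ∘ ⇑σ⁻¹) L)
        = (∑ σ : Equiv.Perm (Fin n), c σ * cExp s L L)
          - ∑ σ : Equiv.Perm (Fin n), c σ * cExp s (eigs ρ' ∘ ⇑σ⁻¹) L := by
      rw [← Finset.sum_sub_distrib]
      exact Finset.sum_congr rfl fun σ _ => by ring
    rw [this, ← key, ← Finset.sum_mul, hc1, one_mul, ← hself, heq]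
    ring
  have hall := (Finset.sum_eq_zero_iff_of_nonneg fun σ _ =>
    mul_nonneg (hc0 σ) (sub_nonneg.2 (hterm σ))).1 hzero
  have heach : ∀ σ : Equiv.Perm (Fin n), c σ ≠ 0 → eigs ρ' ∘ ⇑σ⁻¹ = L := by
    intro σ hσ
    have h0 := hall σ (Finset.mem_univ σ)
    have h1 : cExp s (eigs ρ' ∘ ⇑σ⁻¹) L = cExp s L L := by
      rcases mul_eq_zero.1 h0 with h | h
      · exact absurd h hσ
      · linarith [sub_eq_zero.1 h]
    exact hsp.2 L hL _ (comp_mem_simplex hL' σ⁻¹) h1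
  have hex : ∃ σ : Equiv.Perm (Fin n), c σ ≠ 0 := by
    by_contra hno
    push_neg at hno
    rw [Finset.sum_eq_zero (fun σ _ => hno σ)] at hc1
    exact one_ne_zero hc1.symm
  have hLL' : eigs ρ' = L := by
    obtain ⟨σ₀, hσ₀⟩ := hex
    have h1 : eigs ρ' ∘ ⇑σ₀⁻¹ = L := heach σ₀ hσ₀
    apply antitone_unique (eigs_antitone hρ'.1.1) (eigs_antitone hρ.1.1)
    calc Finset.univ.val.map (eigs ρ')
        = Finset.univ.val.map ((eigs ρ' ∘ ⇑σ₀⁻¹) ∘ ⇑σ₀) := by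
          congr 1
          funext w
          simp
      _ = Finset.univ.val.map (eigs ρ' ∘ ⇑σ₀⁻¹) := multiset_comp_perm _ _
      _ = Finset.univ.val.map L := by rw [h1]
  have hpL : ∀ y, hip (outer (x y)) ρ = L y := by
    intro y
    rw [hcp y]
    have hterm2 : ∀ σ : Equiv.Perm (Fin n), c σ * L (σ y) = c σ * L y := by
      intro σ
      by_cases h0 : c σ = 0
      · rw [h0, zero_mul, zero_mul]
      · have hLσ : L ∘ ⇑σ⁻¹ = L := by
          have hq := heach σ h0
          rwa [hLL'] at hq
        have := congrFun hLσ (σ y)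
        simp only [Function.comp_apply, Equiv.Perm.inv_def, Equiv.symm_apply_apply] at this
        rw [this]
    rw [Finset.sum_congr rfl fun σ _ => hterm2 σ, ← Finset.sum_mul, hc1, one_mul]
  have hρ'eq : ρ' = ∑ y, (L y : ℂ) • outer (x y) := by
    conv_lhs => rw [hx.2]
    rw [hLL']
  have e1 : ∀ B : Mat n, hip B ρ' = ∑ y, L y * hip B (outer (x y)) := by
    intro B
    conv_lhs => rw [hρ'eq]
    rw [hip_sum_right]
    exact Finset.sum_congr rfl fun y _ => hip_smul_right _ _ _
  have e2 : ∀ y, hip (outer (x y)) ρ' = L y := fun y => by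
    rw [hip_outer_self_spec hx, hLL']
  have hS1 : hip ρ' ρ' = ∑ y, L y * L y := by
    rw [e1 ρ']
    exact Finset.sum_congr rfl fun y _ => by rw [hip_comm, e2]
  have hS2 : hip ρ' ρ = ∑ y, L y * L y := by
    rw [hip_comm, e1 ρ]
    exact Finset.sum_congr rfl fun y _ => by rw [hip_comm, hpL]
  have hS3 : hip ρ ρ = ∑ y, L y * L y := by
    have e3 : ∀ B : Mat n, hip B ρ = ∑ y, L y * hip B (outer (z y)) := by
      intro B
      conv_lhs => rw [hz.2]
      rw [hip_sum_right]
      exact Finset.sum_congr rfl fun y _ => hip_smul_right _ _ _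
    rw [e3 ρ]
    exact Finset.sum_congr rfl fun y _ => by rw [hip_comm, hip_outer_self_spec hz]
  have hsub : hip (ρ' - ρ) (ρ' - ρ) = 0 := by
    rw [hip_sub_left, hip_sub_right, hip_sub_right, hS1, hS3, hS2, hip_comm ρ ρ', hS2]
    ring
  have hH : (ρ' - ρ).IsHermitian := hρ'.1.1.sub hρ.1.1
  have := hip_self_eq_zero hH hsub
  exact sub_eq_zero.1 this

end Aux5

section Aux6

open Finset

variable {n : ℕ}

lemma ONFam_single (g : Equiv.Perm (Fin n)) :
    ONFam (fun y => Pi.single (g y) (1 : ℂ)) := by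
  intro i j
  have h : ∀ m, (starRingEnd ℂ) ((Pi.single (g i) (1:ℂ) : Fin n → ℂ) m)
        * (Pi.single (g j) (1:ℂ) : Fin n → ℂ) m
      = if m = g i ∧ m = g j then 1 else 0 := by
    intro m
    by_cases h1 : m = g i <;> by_cases h2 : m = g j <;> simp [Pi.single_apply, h1, h2]
  rw [Finset.sum_congr rfl fun m _ => h m]
  by_cases hij : i = j
  · subst hij
    simp
  · have hne : ∀ m, ¬(m = g i ∧ m = g j) := by
      rintro m ⟨h1, h2⟩
      exact hij (g.injective ((h1.symm.trans h2) ▸ rfl))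
    simp [hne, hij]

lemma diag_decomp (v : Fin n → ℝ) (g : Equiv.Perm (Fin n)) :
    ∑ y, (v y : ℂ) • outer (Pi.single (g y) (1 : ℂ))
      = Matrix.diagonal (fun m => (v (g⁻¹ m) : ℂ)) := by
  ext m m'
  rw [Matrix.sum_apply]
  have h : ∀ y, ((v y : ℂ) • outer (Pi.single (g y) (1:ℂ))) m m'
      = if m = g y ∧ m' = g y then (v y : ℂ) else 0 := by
    intro y
    rw [Matrix.smul_apply, outer_apply]
    by_cases h1 : m = g y <;> by_cases h2 : m' = g y <;> simp [Pi.single_apply, h1, h2]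
  rw [Finset.sum_congr rfl fun y _ => h y]
  by_cases hmm : m = m'
  · subst hmm
    rw [Matrix.diagonal_apply_eq]
    have h2 : ∀ y, (if m = g y ∧ m = g y then (v y : ℂ) else 0)
        = if y = g⁻¹ m then (v y : ℂ) else 0 := by
      intro y
      by_cases hy : y = g⁻¹ m
      · subst hy; simp
      · have hne : ¬(m = g y) := fun hm => hy (by rw [hm]; simp)
        rw [if_neg (fun h => hne h.1), if_neg hy]
    rw [Finset.sum_congr rfl fun y _ => h2 y,
      Finset.sum_ite_eq' Finset.univ (g⁻¹ m) (fun y => (v y : ℂ))]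
    simp
  · rw [Matrix.diagonal_apply_ne _ hmm]
    refine Finset.sum_eq_zero fun y _ => ?_
    have hne : ¬(m = g y ∧ m' = g y) := fun ⟨h1, h2⟩ => hmm (h1.trans h2.symm)
    simp [hne]

lemma hip_outer_single (m : Fin n) (w : Fin n → ℂ) :
    hip (outer (Pi.single m (1:ℂ))) (Matrix.diagonal w) = (w m).re := by
  rw [hip_eq]
  have h1 : ∀ i, ∑ j, outer (Pi.single m (1:ℂ)) i j * Matrix.diagonal w j i
      = if i = m then w m else 0 := by
    intro i
    have h2 : ∀ j, outer (Pi.single m (1:ℂ)) i j * Matrix.diagonal w j i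
        = if j = i ∧ i = m then w m else 0 := by
      intro j
      by_cases hj : j = i
      · subst hj
        by_cases him : j = m
        · subst him; simp [outer_apply, Pi.single_apply, Matrix.diagonal_apply_eq]
        · simp [outer_apply, Pi.single_apply, him]
      · rw [Matrix.diagonal_apply_ne _ hj]
        simp [hj]
    rw [Finset.sum_congr rfl fun j _ => h2 j]
    by_cases him : i = m <;> simp [him]
  rw [Finset.sum_congr rfl fun i _ => h1 i,
    Finset.sum_ite_eq' Finset.univ m (fun _ => w m)]
  simp

lemma diag_mem_Dens {v : Fin n → ℝ} (hv : v ∈ stdSimplex ℝ (Fin n)) :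
    Matrix.diagonal (fun i => (v i : ℂ)) ∈ Dens n := by
  constructor
  · rw [Matrix.posSemidef_diagonal_iff]
    intro i
    exact_mod_cast hv.1 i
  · rw [Matrix.trace_diagonal, ← Complex.ofReal_sum, hv.2, Complex.ofReal_one]

/-- The main construction for the converse direction. -/
lemma construct {p q : Fin n → ℝ} (hp : p ∈ stdSimplex ℝ (Fin n))
    (hq : q ∈ stdSimplex ℝ (Fin n)) :
    ∃ ρ, ρ ∈ Dens n ∧ ∃ ρ', ρ' ∈ Dens n ∧ ∃ x z, IsSpecDecomp ρ' x ∧ IsSpecDecomp ρ z ∧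
      (∀ s : (Fin n → ℝ) → Fin n → ℝ, PermInv s →
        specExp s x ρ' ρ = cExp s q p ∧ specExp s z ρ ρ = cExp s p p) ∧
      (ρ' = ρ → q = p) := by
  classical
  set τ : Equiv.Perm (Fin n) := Fin.revPerm.trans (Tuple.sort p) with hτ
  set δ : Equiv.Perm (Fin n) := Fin.revPerm.trans (Tuple.sort q) with hδ
  have hPanti : Antitone (p ∘ ⇑τ) := by
    intro i j hij
    exact Tuple.monotone_sort p (Fin.rev_le_rev.2 hij)
  have hQanti : Antitone (q ∘ ⇑δ) := by
    intro i j hij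
    exact Tuple.monotone_sort q (Fin.rev_le_rev.2 hij)
  set P : Fin n → ℝ := p ∘ ⇑τ with hPdef
  set Q : Fin n → ℝ := q ∘ ⇑δ with hQdef
  have hPmem : P ∈ stdSimplex ℝ (Fin n) := comp_mem_simplex hp τ
  have hQmem : Q ∈ stdSimplex ℝ (Fin n) := comp_mem_simplex hq δ
  set β : Equiv.Perm (Fin n) := δ⁻¹ * τ with hβ
  -- the honest state and its decomposition
  set ρ : Mat n := Matrix.diagonal (fun i => (P i : ℂ)) with hρdef
  set z : Fin n → Fin n → ℂ := fun y => Pi.single y (1 : ℂ) with hzdef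
  have hzON : ONFam z := ONFam_single 1
  have hρform : ρ = ∑ y, (P y : ℂ) • outer (z y) := by
    rw [hρdef, hzdef]
    have := diag_decomp P 1
    simpa using this.symm
  have heigsρ : eigs ρ = P := eigs_eq_of_antitone hzON hPanti hρform
  have hzdec : IsSpecDecomp ρ z := ⟨hzON, by rw [heigsρ]; exact hρform⟩
  have hρDens : ρ ∈ Dens n := diag_mem_Dens hPmem
  -- the reported state and its decomposition
  set x : Fin n → Fin n → ℂ := fun y => Pi.single (β⁻¹ y) (1 : ℂ) with hxdef
  have hxON : ONFam x := ONFam_single β⁻¹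
  set ρ' : Mat n := Matrix.diagonal (fun m => (Q (β m) : ℂ)) with hρ'def
  have hρ'form : ρ' = ∑ y, (Q y : ℂ) • outer (x y) := by
    rw [hρ'def, hxdef]
    have := diag_decomp Q β⁻¹
    simpa using this.symm
  have heigsρ' : eigs ρ' = Q := eigs_eq_of_antitone hxON hQanti hρ'form
  have hxdec : IsSpecDecomp ρ' x := ⟨hxON, by rw [heigsρ']; exact hρ'form⟩
  have hρ'Dens : ρ' ∈ Dens n := by
    have : (fun m => (Q (β m) : ℂ)) = fun m => ((Q ∘ ⇑β) m : ℂ) := rfl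
    rw [hρ'def, this]
    exact diag_mem_Dens (comp_mem_simplex hQmem β)
  refine ⟨ρ, hρDens, ρ', hρ'Dens, x, z, hxdec, hzdec, ?_, ?_⟩
  · intro s hperm
    constructor
    · -- specExp s x ρ' ρ = cExp s q p
      unfold specExp
      rw [heigsρ']
      calc ∑ y, hip (outer (x y)) ρ * s Q y
          = ∑ y, P (β⁻¹ y) * s Q y := by
            refine Finset.sum_congr rfl fun y _ => ?_
            rw [hxdef, hρdef, hip_outer_single]
            simp
        _ = ∑ y, p (δ y) * s q (δ y) := by
            refine Finset.sum_congr rfl fun y _ => ?_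
            congr 1
            · have : β⁻¹ y = τ⁻¹ (δ y) := by
                rw [hβ]
                simp [Equiv.Perm.mul_apply]
              rw [hPdef, this]
              simp
            · rw [hQdef, untwist hperm δ q y]
        _ = ∑ w, p w * s q w := Equiv.sum_comp δ (fun w => p w * s q w)
        _ = cExp s q p := rfl
    · -- specExp s z ρ ρ = cExp s p p
      rw [specExp_self s hzdec, heigsρ, hPdef]
      exact cExp_comp_self hperm p τ
  · -- ρ' = ρ → q = p
    intro hrr
    funext w
    have h1 : Q (β (τ⁻¹ w)) = P (τ⁻¹ w) := by
      have := congrFun (congrFun hrr (τ⁻¹ w)) (τ⁻¹ w)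
      rw [hρ'def, hρdef, Matrix.diagonal_apply_eq, Matrix.diagonal_apply_eq] at this
      exact_mod_cast this
    have h2 : β (τ⁻¹ w) = δ⁻¹ w := by
      rw [hβ]
      simp [Equiv.Perm.mul_apply]
    rw [h2] at h1
    have h3 : Q (δ⁻¹ w) = q w := by
      rw [hQdef]
      simp
    have h4 : P (τ⁻¹ w) = p w := by
      rw [hPdef]
      simp
    rw [h3, h4] at h1
    exact h1

end Aux6

/-- a spectral score is (strictly) truthful iff the underlying
classical scoring rule is (strictly) proper. -/
theorem spectral_truthful_iff_proper {n : ℕ}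
    (sh : (Fin n → ℝ) → Fin n → ℝ) (hperm : PermInv sh) :
    (SpecTruthful sh ↔ Proper sh) ∧
    (SpecStrictlyTruthful sh ↔ StrictlyProper sh) := by
  have hT2P : SpecTruthful sh → Proper sh := by
    intro hT p hp q hq
    obtain ⟨ρ, hρ, ρ', hρ', x, z, hx, hz, hval, _⟩ := construct hp hq
    obtain ⟨h1, h2⟩ := hval sh hperm
    rw [← h1, ← h2]
    exact hT ρ hρ ρ' hρ' x z hx hz
  have hP2T : Proper sh → SpecTruthful sh := by
    intro hP ρ hρ ρ' hρ' x z hx hz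
    exact (specExp_le_main hperm hP hρ hρ' hx hz).1
  refine ⟨⟨hT2P, hP2T⟩, ?_, ?_⟩
  · rintro ⟨hT, hTs⟩
    refine ⟨hT2P hT, ?_⟩
    intro p hp q hq heq
    obtain ⟨ρ, hρ, ρ', hρ', x, z, hx, hz, hval, himp⟩ := construct hp hq
    obtain ⟨h1, h2⟩ := hval sh hperm
    exact himp (hTs ρ hρ ρ' hρ' x z hx hz (by rw [h1, h2, heq]))
  · intro hSP
    exact ⟨hP2T hSP.1, fun ρ hρ ρ' hρ' x z hx hz heq =>
      (specExp_le_main hperm hSP.1 hρ hρ' hx hz).2 heq hSP⟩
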